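/- Let X be a real random variable with mean μ and finite variance σ², and let α_n → ∞ be a sequence of positive reals. Let (t_n) be a real sequence such that, for all sufficiently large n, t_n is the unique zero of λ_n(t) = E ψ_{α_n}(X − t). Then (t_n − μ)/E[ψ_{α_n}(X − μ)] → 1 as n → ∞, in the following precise sense: for every ε > 0 there exists N such that for all n ≥ N, |t_n − μ − E[ψ_{α_n}(X − μ)]| ≤ ε·|E[ψ_{α_n}(X − μ)]|. -/

import Mathlib

open MeasureTheory Filter

/-- The Huber score function: `ψ_α(x) = x` if `|x| ≤ α`, and `α · sign(x)` otherwise. -/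
noncomputable def huberScore (α x : ℝ) : ℝ := if |x| ≤ α then x else α * Real.sign x

lemma huber_eq_clamp {a x : ℝ} (ha : 0 < a) :
    huberScore a x = max (-a) (min x a) := by
  unfold huberScore
  rcases le_or_gt |x| a with h | h
  · rw [if_pos h]
    rw [abs_le] at h
    rw [min_eq_left h.2, max_eq_right h.1]
  · rw [if_neg (not_le.2 h)]
    rcases lt_or_ge x 0 with hx | hx
    · have hxa : x < -a := by
        rcases abs_cases x with ⟨h1, h2⟩ | ⟨h1, h2⟩ <;> linarith
      rw [Real.sign_of_neg hx, min_eq_left (by linarith), max_eq_left (le_of_lt hxa)]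
      ring
    · have hxa : a < x := by
        rcases abs_cases x with ⟨h1, h2⟩ | ⟨h1, h2⟩ <;> linarith
      rw [Real.sign_of_pos (lt_of_lt_of_le ha hxa.le), min_eq_right hxa.le,
        max_eq_right (by linarith)]
      ring

lemma huber_mono {a x y : ℝ} (ha : 0 < a) (hxy : x ≤ y) :
    huberScore a x ≤ huberScore a y := by
  rw [huber_eq_clamp ha, huber_eq_clamp ha]
  exact max_le_max le_rfl (min_le_min hxy le_rfl)

lemma huber_abs_le {a x : ℝ} (ha : 0 < a) : |huberScore a x| ≤ a := by
  rw [huber_eq_clamp ha, abs_le]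
  constructor
  · exact le_max_left _ _
  · exact max_le (by linarith) (min_le_right _ _)

lemma huber_abs_le_abs {a x : ℝ} (ha : 0 < a) : |huberScore a x| ≤ |x| := by
  rw [huber_eq_clamp ha, abs_le]
  rcases abs_cases x with ⟨h1, h2⟩ | ⟨h1, h2⟩ <;>
    constructor <;>
    simp [max_def, min_def] <;> split_ifs <;> linarith

lemma huber_lip {a x y : ℝ} (ha : 0 < a) (hxy : x ≤ y) :
    huberScore a y - huberScore a x ≤ y - x := by
  rw [huber_eq_clamp ha, huber_eq_clamp ha]
  rcases le_total x a with h1 | h1 <;> rcases le_total y a with h2 | h2 <;>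
    rcases le_total (-a) x with h3 | h3 <;> rcases le_total (-a) y with h4 | h4 <;>
    simp [max_def, min_def] <;> split_ifs <;> linarith

lemma huber_key_pointwise {a s t r m x : ℝ} (ha : 0 < a) (hst : s ≤ t) (hr : 0 < r)
    (h1 : t - a ≤ m - r) (h2 : m + r ≤ s + a) :
    (t - s) * (1 - |x - m| / r) ≤ huberScore a (x - s) - huberScore a (x - t) := by
  rcases le_or_gt (|x - m|) r with h | h
  · rw [abs_le] at h
    have e1 : huberScore a (x - s) = x - s := by
      unfold huberScore; rw [if_pos (abs_le.2 ⟨by linarith, by linarith⟩)]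
    have e2 : huberScore a (x - t) = x - t := by
      unfold huberScore; rw [if_pos (abs_le.2 ⟨by linarith, by linarith⟩)]
    rw [e1, e2]
    have hq : 0 ≤ |x - m| / r := div_nonneg (abs_nonneg _) hr.le
    nlinarith [mul_nonneg (sub_nonneg.2 hst) hq]
  · have hmono := huber_mono ha (show x - t ≤ x - s by linarith)
    have : 1 - |x - m| / r < 0 := by
      rw [sub_neg]
      exact (one_lt_div hr).2 h
    nlinarith [sub_nonneg.2 hst]

set_option maxHeartbeats 1000000 in
/-- if `t_n` is (eventually) the unique zero of `λ_n(t) = E ψ_{α_n}(X − t)`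
with `α_n → ∞`, then `(t_n − μ)/E ψ_{α_n}(X − μ) → 1`, in the sense that for every `ε > 0`
eventually `|t_n − μ − E ψ_{α_n}(X − μ)| ≤ ε |E ψ_{α_n}(X − μ)|`. -/
theorem huber_zero_bias_ratio {Ω : Type*} [MeasureSpace Ω]
    [IsProbabilityMeasure (volume : Measure Ω)]
    (X : Ω → ℝ) (hXmeas : Measurable X) (hXint : Integrable X)
    (μ : ℝ) (hμ : ∫ ω, X ω = μ) (hXL2 : MemLp X 2)
    (α : ℕ → ℝ) (hαpos : ∀ n, 0 < α n) (hα : Tendsto α atTop atTop)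
    (t : ℕ → ℝ)
    (ht : ∀ᶠ n in atTop,
      (∫ ω, huberScore (α n) (X ω - t n)) = 0 ∧
        ∀ s : ℝ, (∫ ω, huberScore (α n) (X ω - s)) = 0 → s = t n) :
    ∀ ε : ℝ, 0 < ε → ∃ N : ℕ, ∀ n ≥ N,
      |t n - μ - ∫ ω, huberScore (α n) (X ω - μ)| ≤
        ε * |∫ ω, huberScore (α n) (X ω - μ)| := by
  intro ε hε
  have hXc : Integrable (fun ω => |X ω - μ|) := (hXint.sub (integrable_const μ)).abs
  set c := ∫ ω, |X ω - μ| with hcdef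
  have hc0 : 0 ≤ c := integral_nonneg fun ω => abs_nonneg _
  -- integrability of huber compositions
  have hInt : ∀ (n : ℕ) (s : ℝ), Integrable (fun ω => huberScore (α n) (X ω - s)) := by
    intro n s
    refine Integrable.mono' (integrable_const (α n)) ?_ ?_
    · have hm : Measurable fun y : ℝ => huberScore (α n) y := by
        have : (fun y : ℝ => huberScore (α n) y)
            = fun y => max (-(α n)) (min y (α n)) := funext fun y => huber_eq_clamp (hαpos n)
        rw [this]
        exact Measurable.max measurable_const (measurable_id.min measurable_const)
      exact (hm.comp (hXmeas.sub measurable_const)).aestronglyMeasurable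
    · filter_upwards with ω
      rw [Real.norm_eq_abs]
      exact huber_abs_le (hαpos n)
  -- monotonicity
  have hmono : ∀ (n : ℕ) (s u : ℝ), s ≤ u →
      (∫ ω, huberScore (α n) (X ω - u)) ≤ ∫ ω, huberScore (α n) (X ω - s) := by
    intro n s u hsu
    exact integral_mono (hInt n u) (hInt n s)
      fun ω => huber_mono (hαpos n) (by linarith)
  -- Lipschitz
  have hlip : ∀ (n : ℕ) (s u : ℝ), s ≤ u →
      (∫ ω, huberScore (α n) (X ω - s)) - (∫ ω, huberScore (α n) (X ω - u)) ≤ u - s := by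
    intro n s u hsu
    rw [← integral_sub (hInt n s) (hInt n u)]
    calc (∫ ω, (huberScore (α n) (X ω - s) - huberScore (α n) (X ω - u)))
        ≤ ∫ _ω, (u - s) := by
          refine integral_mono ((hInt n s).sub (hInt n u)) (integrable_const _) fun ω => ?_
          have := huber_lip (hαpos n) (show X ω - u ≤ X ω - s by linarith)
          linarith
      _ = u - s := by simp
  -- key lower bound
  have hkey : ∀ (n : ℕ) (s u r : ℝ), s ≤ u → 0 < r → u - α n ≤ μ - r → μ + r ≤ s + α n →
      (u - s) * (1 - c / r) ≤
        (∫ ω, huberScore (α n) (X ω - s)) - (∫ ω, huberScore (α n) (X ω - u)) := by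
    intro n s u r hsu hr h1 h2
    rw [← integral_sub (hInt n s) (hInt n u)]
    have heq : (u - s) * (1 - c / r) = ∫ ω, (u - s) * (1 - |X ω - μ| / r) := by
      rw [integral_const_mul]
      congr 1
      rw [integral_sub (integrable_const 1) (hXc.div_const r), integral_div]
      simp [hcdef]
    rw [heq]
    refine integral_mono (((integrable_const 1).sub (hXc.div_const r)).const_mul _)
      ((hInt n s).sub (hInt n u)) fun ω => ?_
    exact huber_key_pointwise (hαpos n) hsu hr h1 h2
  -- bound on b
  have hb_le : ∀ n : ℕ, |∫ ω, huberScore (α n) (X ω - μ)| ≤ c := by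
    intro n
    calc |∫ ω, huberScore (α n) (X ω - μ)|
        ≤ ∫ ω, |huberScore (α n) (X ω - μ)| := by
          simpa [Real.norm_eq_abs] using
            norm_integral_le_integral_norm (fun ω => huberScore (α n) (X ω - μ))
      _ ≤ ∫ ω, |X ω - μ| :=
          integral_mono (hInt n μ).abs hXc fun ω => huber_abs_le_abs (hαpos n)
  obtain ⟨N₀, hN₀⟩ := eventually_atTop.1 ht
  obtain ⟨N₁, hN₁⟩ := eventually_atTop.1
    (hα.eventually_ge_atTop ((1 + ε) * c + ((1 + ε) * c / ε + 1)))
  refine ⟨max N₀ N₁, fun n hn => ?_⟩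
  obtain ⟨hzero, huniq⟩ := hN₀ n (le_trans (le_max_left _ _) hn)
  have hαn := hN₁ n (le_trans (le_max_right _ _) hn)
  set b := ∫ ω, huberScore (α n) (X ω - μ) with hbdef
  set r := α n - (1 + ε) * c with hrdef
  have hr1 : (1 + ε) * c / ε + 1 ≤ r := by rw [hrdef]; linarith
  have hrpos : 0 < r := lt_of_lt_of_le (by positivity) hr1
  have hcr : (1 + ε) * c / r < ε := by
    rw [div_lt_iff₀ hrpos]
    have h1 : (1 + ε) * c / ε * ε = (1 + ε) * c := div_mul_cancel₀ _ (ne_of_gt hε)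
    nlinarith
  have hbc : |b| ≤ c := hb_le n
  have hd0 : 0 ≤ c / r := div_nonneg hc0 hrpos.le
  set d := c / r with hddef
  have hd1 : (1 + ε) * d < ε := by
    rw [hddef, ← mul_div_assoc]
    exact hcr
  rcases lt_trichotomy b 0 with hb | hb | hb
  · -- b < 0
    have hbc' : -b ≤ c := le_trans (neg_le_abs b) hbc
    have hL1 : (∫ ω, huberScore (α n) (X ω - (μ + b))) ≤ 0 := by
      have := hlip n (μ + b) μ (by linarith)
      rw [← hbdef] at this; linarith
    have hL2 : b * d ≤ ∫ ω, huberScore (α n) (X ω - (μ + b)) := by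
      have hk := hkey n (μ + b) μ r (by linarith) hrpos (by rw [hrdef]; nlinarith)
        (by rw [hrdef]; nlinarith)
      rw [← hbdef, ← hddef] at hk
      have hexp : μ - (μ + b) = -b := by ring
      rw [hexp] at hk
      nlinarith
    have hL3 : 0 < ∫ ω, huberScore (α n) (X ω - (μ + (1 + ε) * b)) := by
      have hk := hkey n (μ + (1 + ε) * b) (μ + b) r (by nlinarith) hrpos
        (by rw [hrdef]; nlinarith) (by rw [hrdef]; nlinarith)
      rw [← hddef] at hk
      have hexp : μ + b - (μ + (1 + ε) * b) = -(ε * b) := by ring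
      rw [hexp] at hk
      nlinarith [mul_pos_of_neg_of_neg hb (show (1 + ε) * d - ε < 0 by linarith)]
    have ht1 : μ + (1 + ε) * b ≤ t n := by
      by_contra hcon
      push_neg at hcon
      have := hmono n (t n) (μ + (1 + ε) * b) hcon.le
      rw [hzero] at this; linarith
    have ht2 : t n ≤ μ + b := by
      by_contra hcon
      push_neg at hcon
      have h4 := hmono n (μ + b) (t n) hcon.le
      rw [hzero] at h4
      have h5 : (∫ ω, huberScore (α n) (X ω - (μ + b))) = 0 := le_antisymm hL1 h4
      have := huniq (μ + b) h5
      linarith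
    rw [abs_of_neg hb, abs_le]
    constructor <;> linarith
  · -- b = 0
    have h0 := huniq μ (by rw [← hbdef]; exact hb)
    rw [← h0, hb]
    simp
  · -- b > 0
    have hbc' : b ≤ c := (le_abs_self b).trans hbc
    have hL1 : 0 ≤ ∫ ω, huberScore (α n) (X ω - (μ + b)) := by
      have := hlip n μ (μ + b) (by linarith)
      rw [← hbdef] at this; linarith
    have hL2 : (∫ ω, huberScore (α n) (X ω - (μ + b))) ≤ b * d := by
      have hk := hkey n μ (μ + b) r (by linarith) hrpos (by rw [hrdef]; nlinarith)
        (by rw [hrdef]; nlinarith)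
      rw [← hbdef, ← hddef] at hk
      have hexp : μ + b - μ = b := by ring
      rw [hexp] at hk
      nlinarith
    have hL3 : (∫ ω, huberScore (α n) (X ω - (μ + (1 + ε) * b))) < 0 := by
      have hk := hkey n (μ + b) (μ + (1 + ε) * b) r (by nlinarith) hrpos
        (by rw [hrdef]; nlinarith) (by rw [hrdef]; nlinarith)
      rw [← hddef] at hk
      have hexp : μ + (1 + ε) * b - (μ + b) = ε * b := by ring
      rw [hexp] at hk
      nlinarith [mul_pos hb (show 0 < ε - (1 + ε) * d by linarith)]
    have ht1 : t n ≤ μ + (1 + ε) * b := by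
      by_contra hcon
      push_neg at hcon
      have := hmono n (μ + (1 + ε) * b) (t n) hcon.le
      rw [hzero] at this; linarith
    have ht2 : μ + b ≤ t n := by
      by_contra hcon
      push_neg at hcon
      have h4 := hmono n (t n) (μ + b) hcon.le
      rw [hzero] at h4
      have h5 : (∫ ω, huberScore (α n) (X ω - (μ + b))) = 0 := le_antisymm h4 hL1
      have := huniq (μ + b) h5
      linarith
    rw [abs_of_pos hb, abs_le]
    constructor <;> linarith
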